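/- Let (X,r) be a square-free solution of arbitrary cardinality whose permutation group G(X,r) is abelian. Then for every x ∈ X, the restriction of L_x to the G(X,r)-orbit of x is the identity; i.e. each orbit, with the restricted solution, is a trivial solution. -/
import Mathlib


namespace YBPaper

variable {X : Type*}

/-- Left translation: `lact r x y = ˣy`. -/
def lact (r : X × X → X × X) (x y : X) : X := (r (x, y)).1

/-- Right translation: `ract r x y = xʸ`. -/
def ract (r : X × X → X × X) (x y : X) : X := (r (x, y)).2

def r12 (r : X × X → X × X) : X × X × X → X × X × X :=
  fun p => ((r (p.1, p.2.1)).1, (r (p.1, p.2.1)).2, p.2.2)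

def r23 (r : X × X → X × X) : X × X × X → X × X × X :=
  fun p => (p.1, r (p.2.1, p.2.2))

/-- A non-degenerate involutive square-free set-theoretic solution of the YBE. -/
structure IsSquareFreeSolution (r : X × X → X × X) : Prop where
  nondegL : ∀ x : X, Function.Bijective fun y => (r (x, y)).1
  nondegR : ∀ y : X, Function.Bijective fun x => (r (x, y)).2
  invol : ∀ p : X × X, r (r p) = p
  sqfree : ∀ x : X, r (x, x) = (x, x)
  braided : ∀ p : X × X × X, r12 r (r23 r (r12 r p)) = r23 r (r12 r (r23 r p))

/-- `relk l k x y` means the images of `x` and `y` in the `k`-th retract coincide. -/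
def relk (l : X → X → X) : ℕ → X → X → Prop
  | 0 => fun x y => x = y
  | (k+1) => fun x y => ∀ z : X, relk l k (l x z) (l y z)

/-- `mplLe l m` : the `m`-th retract is a one-element solution, i.e. `mpl ≤ m`. -/
def mplLe (l : X → X → X) (m : ℕ) : Prop := ∀ x y : X, relk l m x y

/-- `mplEq l m` : the multipermutation level is exactly `m`. -/
def mplEq (l : X → X → X) (m : ℕ) : Prop := mplLe l m ∧ ∀ k < m, ¬ mplLe l k

/-- The set of left translations, as permutations. -/
def lperms (r : X × X → X × X) : Set (Equiv.Perm X) :=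
  {σ : Equiv.Perm X | ∃ x : X, ∀ y : X, σ y = (r (x, y)).1}

/-- The YB permutation group `𝒢(X,r)`, generated by the left translations. -/
def Gcal (r : X × X → X × X) : Subgroup (Equiv.Perm X) := Subgroup.closure (lperms r)


/-- if `𝒢(X,r)` is abelian then every `L_x` restricts to the identity
on the `𝒢(X,r)`-orbit of `x`, i.e. every orbit is a trivial solution. -/
theorem stmt7 {X : Type*} (r : X × X → X × X) (h : IsSquareFreeSolution r)
    (hab : ∀ σ ∈ Gcal r, ∀ τ ∈ Gcal r, σ * τ = τ * σ) :
    ∀ x : X, ∀ ξ ∈ MulAction.orbit (↥(Gcal r)) x, lact r x ξ = ξ := by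
  intro x ξ hξ
  obtain ⟨g, rfl⟩ := hξ
  set Lx : Equiv.Perm X := Equiv.ofBijective _ (h.nondegL x) with hLx
  have hLmem : Lx ∈ Gcal r := Subgroup.subset_closure ⟨x, fun y => rfl⟩
  have hcomm : Lx * (g : Equiv.Perm X) = (g : Equiv.Perm X) * Lx :=
    hab _ hLmem _ g.2
  have hfix : Lx x = x := by
    show (r (x, x)).1 = x
    rw [h.sqfree x]
  have : Lx ((g : Equiv.Perm X) x) = (g : Equiv.Perm X) (Lx x) := by
    have := congrArg (fun σ : Equiv.Perm X => σ x) hcomm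
    simpa using this
  show Lx (g • x) = g • x
  have hsmul : g • x = (g : Equiv.Perm X) x := rfl
  rw [hsmul, this, hfix]

end YBPaper
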